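/- Define for N ≥ 1 and m = ⌈log₂ N⌉ the iterated receptive field R_r ⊆ ZMod N by R_0 = {0} and R_{r+1} = { x + o : x ∈ R_r, o ∈ {0} ∪ {2^k mod N : k < m} }. Then R_m = ZMod N, i.e., after m steps the receptive field is full. -/
import Mathlib


def chordOffsets (N m : ℕ) : Set (ZMod N) :=
  {0} ∪ {o | ∃ k < m, o = (2 : ZMod N) ^ k}

def receptiveField (N m : ℕ) : ℕ → Set (ZMod N)
  | 0 => {0}
  | r + 1 => {y | ∃ x ∈ receptiveField N m r, ∃ o ∈ chordOffsets N m, y = x + o}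

lemma rf_aux (N m : ℕ) : ∀ r, r ≤ m → ∀ n : ℕ, n < 2 ^ r →
    (n : ZMod N) ∈ receptiveField N m r := by
  intro r
  induction r with
  | zero =>
    intro _ n hn
    interval_cases n
    simp [receptiveField]
  | succ r ih =>
    intro hr n hn
    rcases lt_or_ge n (2 ^ r) with h | h
    · refine ⟨(n : ZMod N), ih (by omega) n h, 0, Or.inl rfl, by ring⟩
    · refine ⟨((n - 2 ^ r : ℕ) : ZMod N), ih (by omega) _ (by
        have := Nat.pow_succ 2 r; omega), (2 : ZMod N) ^ r,
        Or.inr ⟨r, by omega, rfl⟩, ?_⟩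
      have : n = (n - 2 ^ r) + 2 ^ r := by omega
      conv_lhs => rw [this]
      push_cast
      ring

theorem receptiveField_full (N : ℕ) (hN : 1 ≤ N) :
    receptiveField N (Nat.clog 2 N) (Nat.clog 2 N) = Set.univ := by
  haveI : NeZero N := ⟨by omega⟩
  ext z
  simp only [Set.mem_univ, iff_true]
  have h1 : z.val < N := ZMod.val_lt z
  have h2 : N ≤ 2 ^ Nat.clog 2 N := Nat.le_pow_clog (by norm_num) N
  have := rf_aux N (Nat.clog 2 N) (Nat.clog 2 N) le_rfl z.val (by omega)
  rwa [ZMod.natCast_val, ZMod.cast_id] at this
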